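/- arXiv:2112.01862 — 3 statements merged into one kernel-verified Lean document; each statement's English description precedes it below -/
import Mathlib

section
/- Let Φ : ℤ → ℂ^{1×J} be a deterministic characteristic with Σ_{k∈ℤ} ‖Φ(k)‖ ρ^{-k} < ∞, and let Z_n^Φ := Σ_{k=-∞}^{n} Φ(k) Z_{n-k} be the branching process counted with characteristic Φ. If Z_n/ρ^n → W u almost surely (Kesten–Stigum), then ρ^{-n} Z_n^Φ → W · (Σ_{k∈ℤ} Φ(k) ρ^{-k}) u almost surely as n → ∞. -/
open MeasureTheory Filter

noncomputable section

/-- Euclidean (Hilbert–Schmidt) norm of a row vector. -/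
def frobV {J : ℕ} (v : Fin J → ℂ) : ℝ := Real.sqrt (∑ j, ‖v j‖ ^ 2)

lemma abs_le_frobV {J : ℕ} (v : Fin J → ℂ) (j : Fin J) : ‖v j‖ ≤ frobV v := by
  rw [frobV, show ‖v j‖ = Real.sqrt (‖v j‖ ^ 2) by
    rw [Real.sqrt_sq (norm_nonneg _)]]
  exact Real.sqrt_le_sqrt (Finset.single_le_sum (f := fun i => ‖v i‖ ^ 2) (fun i _ => sq_nonneg _) (Finset.mem_univ j))

lemma frobV_nonneg {J : ℕ} (v : Fin J → ℂ) : 0 ≤ frobV v := Real.sqrt_nonneg _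

/-- law of large numbers for a deterministic characteristic.  If
`Σ_{k∈ℤ} ‖Φ(k)‖ρ^{-k} < ∞` and `ρ^{-n} Z_n → W u` a.s. (Kesten–Stigum), then
`ρ^{-n} Z_n^Φ → W (Σ_{k∈ℤ} Φ(k) ρ^{-k}) u` a.s., where
`Z_n^Φ = Σ_{k ≤ n} Φ(k) Z_{n-k}`. -/
theorem lln_deterministic_characteristic
    {J : ℕ} {Ω : Type*} [MeasurableSpace Ω] (μ : Measure Ω) [IsProbabilityMeasure μ]
    (Z : ℕ → Ω → Fin J → ℕ) (ρ : ℝ) (uvec : Fin J → ℝ) (W : Ω → ℝ)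
    (hρ : 1 < ρ)
    (hKS : ∀ᵐ ω ∂μ, Tendsto (fun n => fun j => (Z n ω j : ℝ) / ρ ^ n) atTop
      (nhds fun j => W ω * uvec j))
    (Φ : ℤ → Fin J → ℂ)
    (hΦ : Summable fun k : ℤ => frobV (Φ k) * ρ ^ (-k))
    (ZΦ : ℕ → Ω → ℂ)
    (hZΦ : ∀ n ω, ZΦ n ω = ∑' m : ℕ, ∑ j, Φ ((n : ℤ) - m) j * (Z m ω j : ℂ)) :
    ∀ᵐ ω ∂μ, Tendsto (fun n : ℕ => ZΦ n ω / (ρ : ℂ) ^ n) atTop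
      (nhds ((W ω : ℂ) * ∑' k : ℤ, (∑ j, Φ k j * (uvec j : ℂ)) * (ρ : ℂ) ^ (-k))) := by
  have hρ0 : (0:ℝ) < ρ := lt_trans one_pos hρ
  have hρne : (ρ:ℂ) ≠ 0 := by exact_mod_cast (ne_of_gt hρ0)
  filter_upwards [hKS] with ω hω
  -- complex normalized process
  set x : ℕ → Fin J → ℂ := fun m j => (Z m ω j : ℂ) / (ρ:ℂ) ^ m with hxdef
  set L : Fin J → ℂ := fun j => ((W ω * uvec j : ℝ) : ℂ) with hLdef
  have hx : ∀ j, Tendsto (fun m => x m j) atTop (nhds (L j)) := by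
    intro j
    have h1 : Tendsto (fun m => ((Z m ω j : ℝ) / ρ ^ m)) atTop (nhds (W ω * uvec j)) :=
      tendsto_pi_nhds.mp hω j
    have := (Complex.continuous_ofReal.tendsto _).comp h1
    refine this.congr fun m => ?_
    simp only [hxdef, Function.comp_apply]
    push_cast
    ring
  set A : ℤ → Fin J → ℂ := fun k j => Φ k j * (ρ:ℂ) ^ (-k) with hAdef
  set xt : ℤ → Fin J → ℂ := fun t j => if 0 ≤ t then x t.toNat j else 0 with hxtdef
  -- uniform bound on x
  have hbd : ∃ C : ℝ, ∀ t j, ‖xt t j‖ ≤ C := by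
    have h1 : ∀ j : Fin J, ∃ Cj : ℝ, ∀ m, ‖x m j‖ ≤ Cj := by
      intro j
      have : Tendsto (fun m => ‖x m j‖) atTop (nhds (‖L j‖)) :=
        (continuous_norm.tendsto _).comp (hx j)
      obtain ⟨c, hc⟩ := this.bddAbove_range
      exact ⟨c, fun m => hc (Set.mem_range_self m)⟩
    choose Cj hCj using h1
    refine ⟨∑ j, max (Cj j) 0, fun t j => ?_⟩
    have hle : ‖xt t j‖ ≤ max (Cj j) 0 := by
      by_cases h : 0 ≤ t
      · simp only [hxtdef, if_pos h]
        exact le_trans (hCj j t.toNat) (le_max_left _ _)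
      · simp only [hxtdef, if_neg h]
        simp
    exact le_trans hle (Finset.single_le_sum (f := fun j => max (Cj j) 0)
      (fun i _ => le_max_right _ _) (Finset.mem_univ j))
  obtain ⟨C0, hC0'⟩ := hbd
  set C : ℝ := max C0 0 with hCdef
  have hC : ∀ t j, ‖xt t j‖ ≤ C := fun t j => le_trans (hC0' t j) (le_max_left _ _)
  have hCnn : 0 ≤ C := le_max_right _ _
  have hbound_sum : Summable (fun k : ℤ => frobV (Φ k) * ρ ^ (-k) * (C * J)) :=
    hΦ.mul_right (C * J)
  have hAbs : ∀ (k : ℤ) (j : Fin J), ‖A k j‖ ≤ frobV (Φ k) * ρ ^ (-k) := by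
    intro k j
    have h1 : ‖(ρ:ℂ) ^ (-k)‖ = ρ ^ (-k) := by
      rw [norm_zpow, Complex.norm_real, Real.norm_of_nonneg hρ0.le]
    rw [hAdef]
    simp only [norm_mul, h1]
    exact mul_le_mul_of_nonneg_right (abs_le_frobV _ j) (le_of_lt (zpow_pos hρ0 _))
  have key : Tendsto (fun n : ℕ => ∑' k : ℤ, ∑ j, A k j * xt ((n:ℤ) - k) j) atTop
      (nhds (∑' k : ℤ, ∑ j, A k j * L j)) := by
    apply tendsto_tsum_of_dominated_convergence hbound_sum
    · intro k
      have hxt : ∀ j, Tendsto (fun n : ℕ => xt ((n:ℤ) - k) j) atTop (nhds (L j)) := by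
        intro j
        have hnat : Tendsto (fun n : ℕ => ((n:ℤ) - k).toNat) atTop atTop := by
          apply tendsto_atTop_atTop.mpr
          intro b
          exact ⟨b + k.toNat, fun n hn => by omega⟩
        refine ((hx j).comp hnat).congr' ?_
        filter_upwards [eventually_ge_atTop k.toNat] with n hn
        have h0 : (0:ℤ) ≤ (n:ℤ) - k := by omega
        simp [hxtdef, if_pos h0, Function.comp]
      exact tendsto_finset_sum _ (fun j _ => (hxt j).const_mul (A k j))
    · refine Eventually.of_forall (fun n k => ?_)
      calc ‖∑ j, A k j * xt ((n:ℤ) - k) j‖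
          ≤ ∑ j, ‖A k j * xt ((n:ℤ) - k) j‖ := norm_sum_le _ _
        _ ≤ ∑ _j : Fin J, frobV (Φ k) * ρ ^ (-k) * C := by
            refine Finset.sum_le_sum (fun j _ => ?_)
            rw [norm_mul]
            exact mul_le_mul (hAbs k j) (hC _ j) (norm_nonneg _)
              (mul_nonneg (frobV_nonneg _) (le_of_lt (zpow_pos hρ0 _)))
        _ = frobV (Φ k) * ρ ^ (-k) * (C * J) := by
            rw [Finset.sum_const, Finset.card_univ, Fintype.card_fin, nsmul_eq_mul]
            ring
  have hid : ∀ n : ℕ, ZΦ n ω / (ρ:ℂ) ^ n = ∑' k : ℤ, ∑ j, A k j * xt ((n:ℤ) - k) j := by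
    intro n
    rw [hZΦ n ω, ← tsum_div_const]
    have inj : Function.Injective (fun m : ℕ => (n:ℤ) - m) := by
      intro a b h
      simp only at h
      omega
    have hsupp : Function.support (fun k : ℤ => ∑ j, A k j * xt ((n:ℤ) - k) j)
        ⊆ Set.range (fun m : ℕ => (n:ℤ) - m) := by
      intro k hk
      rcases le_or_gt 0 ((n:ℤ) - k) with h | h
      · exact ⟨((n:ℤ) - k).toNat, by simp [Int.toNat_of_nonneg h]⟩
      · exfalso
        apply hk
        refine Finset.sum_eq_zero (fun j _ => ?_)
        simp [hxtdef, not_le.mpr h]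
        exact fun h' => absurd h' (by omega)
    rw [← inj.tsum_eq hsupp]
    apply tsum_congr
    intro m
    have hmm : (n:ℤ) - ((n:ℤ) - m) = (m:ℤ) := by ring
    rw [hmm]
    have hxtm : ∀ j, xt (m:ℤ) j = x m j := by
      intro j
      simp [hxtdef]
    rw [Finset.sum_div]
    refine Finset.sum_congr rfl (fun j _ => ?_)
    rw [hxtm j, hAdef, hxdef]
    have hz : (ρ:ℂ) ^ (-((n:ℤ) - m)) = ((ρ:ℂ) ^ n)⁻¹ * (ρ:ℂ) ^ m := by
      rw [← zpow_natCast (ρ:ℂ) m, ← zpow_natCast (ρ:ℂ) n, ← zpow_neg, ← zpow_add₀ hρne]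
      congr 1
      ring
    simp only []
    rw [hz]
    have hm0 : (ρ:ℂ) ^ m ≠ 0 := pow_ne_zero _ hρne
    have hn0 : (ρ:ℂ) ^ n ≠ 0 := pow_ne_zero _ hρne
    field_simp
  have hlim : (∑' k : ℤ, ∑ j, A k j * L j)
      = (W ω : ℂ) * ∑' k : ℤ, (∑ j, Φ k j * (uvec j : ℂ)) * (ρ:ℂ) ^ (-k) := by
    rw [← tsum_mul_left]
    apply tsum_congr
    intro k
    rw [Finset.sum_mul, Finset.mul_sum]
    refine Finset.sum_congr rfl (fun j _ => ?_)
    simp only [hAdef, hLdef]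
    push_cast
    ring
  have := key.congr (fun n => (hid n).symm)
  rwa [hlim] at this

end
end

section
/- Let Φ : ℤ → ℂ^{d×J} be deterministic with Σ_{k≥0} ‖Φ(−k)‖ρ^k < ∞, suppose E[‖L‖²] < ∞ and Σ_{k∈ℤ} ‖E[Z_k^Φ | Z_0 = e_j]‖² ρ^{-k} < ∞ for every initial type j. Then the star characteristic Φ*(k) = Σ_{l≥0} Φ(k−1−l)A^l(L−A) satisfies Σ_{k∈ℤ} E[‖Φ*(k)‖²] ρ^{-k} < ∞. -/
open MeasureTheory Filter

set_option maxHeartbeats 2000000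

noncomputable section

/-- Hilbert–Schmidt norm of a `d × J` complex matrix. -/
def frobM {d J : ℕ} (M : Fin d → Fin J → ℂ) : ℝ :=
  Real.sqrt (∑ a, ∑ j, ‖M a j‖ ^ 2)

lemma frobM_nonneg {d J : ℕ} (M : Fin d → Fin J → ℂ) : 0 ≤ frobM M :=
  Real.sqrt_nonneg _

lemma abs_le_frobM {d J : ℕ} (M : Fin d → Fin J → ℂ) (a : Fin d) (j : Fin J) :
    ‖M a j‖ ≤ frobM M := by
  have h1 : ‖M a j‖ ^ 2 ≤ ∑ a', ∑ j', ‖M a' j'‖ ^ 2 := by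
    calc ‖M a j‖ ^ 2 ≤ ∑ j', ‖M a j'‖ ^ 2 :=
          Finset.single_le_sum (f := fun j' => ‖M a j'‖ ^ 2)
            (fun _ _ => sq_nonneg _) (Finset.mem_univ j)
      _ ≤ ∑ a', ∑ j', ‖M a' j'‖ ^ 2 :=
          Finset.single_le_sum (f := fun a' => ∑ j', ‖M a' j'‖ ^ 2)
            (fun _ _ => Finset.sum_nonneg fun _ _ => sq_nonneg _) (Finset.mem_univ a)
  calc ‖M a j‖ = Real.sqrt (‖M a j‖ ^ 2) :=
        (Real.sqrt_sq (norm_nonneg _)).symm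
    _ ≤ frobM M := Real.sqrt_le_sqrt h1

lemma sq_frobM_eq {d J : ℕ} (M : Fin d → Fin J → ℂ) :
    frobM M ^ 2 = ∑ a, ∑ j, ‖M a j‖ ^ 2 :=
  Real.sq_sqrt (Finset.sum_nonneg fun _ _ => Finset.sum_nonneg fun _ _ => sq_nonneg _)

/-- if moreover `E[‖L‖²] < ∞` and
`Σ_{k∈ℤ} ‖E[Z_k^Φ | Z_0 = e_j]‖² ρ^{-k} < ∞` for every initial type `j`
(where `E[Z_k^Φ | Z_0 = e_j] = Σ_{l≥0} Φ(k-l) A^l e_j`), then the star characteristic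
`Φ*(k) = Σ_{l≥0} Φ(k-1-l)A^l(L-A)` satisfies `Σ_{k∈ℤ} E[‖Φ*(k)‖²] ρ^{-k} < ∞`. -/
theorem star_characteristic_second_moment
    {J d : ℕ} {Ω : Type*} [MeasurableSpace Ω] (μ : Measure Ω) [IsProbabilityMeasure μ]
    (L : Ω → Fin J → Fin J → ℝ)
    (hLmeas : Measurable L)
    (hL2 : ∀ i j, Integrable (fun ω => (L ω i j) ^ 2) μ)
    (A : Matrix (Fin J) (Fin J) ℝ) (ρ : ℝ)
    (hA : ∀ i j, ∫ ω, L ω i j ∂μ = A i j)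
    (hρ : 1 < ρ)
    (hAg : ∃ C : ℝ, ∀ l : ℕ, ∀ i j, |(A ^ l) i j| ≤ C * ρ ^ l)
    (Φ : ℤ → Fin d → Fin J → ℂ)
    (hΦ : Summable fun k : ℕ => frobM (Φ (-(k : ℤ))) * ρ ^ k)
    (m : Fin J → ℤ → Fin d → ℂ)
    (hm : ∀ j k a, m j k a = ∑' l : ℕ, ∑ i, Φ (k - l) a i * (((A ^ l) i j : ℝ) : ℂ))
    (hmoment : ∀ j, Summable fun k : ℤ =>
      (∑ a, ‖m j k a‖ ^ 2) * ρ ^ (-k))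
    (Φstar : ℤ → Ω → Fin d → Fin J → ℂ)
    (hΦstar : ∀ k ω a j, Φstar k ω a j =
      ∑' l : ℕ, ∑ i, (∑ i', Φ (k - 1 - l) a i' * (((A ^ l) i' i : ℝ) : ℂ)) *
        (((L ω i j : ℝ) : ℂ) - ((A i j : ℝ) : ℂ))) :
    Summable fun k : ℤ => (∫ ω, frobM (Φstar k ω) ^ 2 ∂μ) * ρ ^ (-k) := by
  classical
  have hρ0 : (0:ℝ) < ρ := lt_trans one_pos hρ
  obtain ⟨C, hC⟩ := hAg
  -- summability of the shifted Φ series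
  have hsum1 : ∀ m' : ℤ, Summable (fun l : ℕ => frobM (Φ (m' - l)) * ρ ^ l) := by
    intro m'
    set t : ℕ := m'.toNat with ht
    rw [← summable_nat_add_iff t]
    set s : ℕ := ((t : ℤ) - m').toNat with hs
    have hst : (s : ℤ) = (t : ℤ) - m' := by
      rw [hs]
      exact Int.toNat_of_nonneg (by linarith [Int.self_le_toNat m'])
    have heq : (fun l : ℕ => frobM (Φ (m' - ((l + t : ℕ) : ℤ))) * ρ ^ (l + t))
        = fun l : ℕ => (frobM (Φ (-((l + s : ℕ) : ℤ))) * ρ ^ (l + s)) * (ρ ^ t / ρ ^ s) := by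
      funext l
      have h1 : (m' - ((l + t : ℕ) : ℤ)) = -((l + s : ℕ) : ℤ) := by
        push_cast
        omega
      rw [h1, pow_add, pow_add]
      field_simp
    rw [heq]
    exact Summable.mul_right _ ((summable_nat_add_iff s).mpr hΦ)
  -- summability of the entrywise series defining `m`
  have hsum2 : ∀ (m' : ℤ) (a : Fin d) (i' i : Fin J),
      Summable (fun l : ℕ => Φ (m' - l) a i' * (((A ^ l) i' i : ℝ) : ℂ)) := by
    intro m' a i' i
    apply Summable.of_norm_bounded ((hsum1 m').mul_right C)
    intro l
    rw [norm_mul, Complex.norm_real, Real.norm_eq_abs]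
    calc ‖Φ (m' - l) a i'‖ * |(A ^ l) i' i|
        ≤ frobM (Φ (m' - l)) * (C * ρ ^ l) :=
          mul_le_mul (abs_le_frobM _ _ _) (hC l i' i) (abs_nonneg _) (frobM_nonneg _)
      _ = frobM (Φ (m' - l)) * ρ ^ l * C := by ring
  -- rewrite Φstar as a finite sum
  have hswap : ∀ k ω a j, Φstar k ω a j =
      ∑ i, m i (k - 1) a * (((L ω i j - A i j : ℝ)) : ℂ) := by
    intro k ω a j
    rw [hΦstar]
    have hsumm : ∀ i ∈ Finset.univ, Summable (fun l : ℕ =>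
        (∑ i', Φ (k - 1 - l) a i' * (((A ^ l) i' i : ℝ) : ℂ)) *
          (((L ω i j : ℝ) : ℂ) - ((A i j : ℝ) : ℂ))) := by
      intro i _
      exact (summable_sum (fun i' _ => hsum2 (k - 1) a i' i)).mul_right _
    rw [Summable.tsum_finsetSum hsumm]
    refine Finset.sum_congr rfl fun i _ => ?_
    rw [tsum_mul_right, ← hm]
    push_cast
    ring
  -- integrability of the quadratic variation term
  have hLint : ∀ i j, Integrable (fun ω => L ω i j) μ := by
    intro i j
    refine Integrable.mono' ((hL2 i j).add (integrable_const 1))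
      (hLmeas.eval.eval).aestronglyMeasurable ?_
    filter_upwards with ω
    simp only [Pi.add_apply, Real.norm_eq_abs]
    nlinarith [sq_nonneg (|L ω i j| - 1), sq_abs (L ω i j)]
  set T : Ω → ℝ := fun ω => ∑ i, ∑ j, (L ω i j - A i j) ^ 2 with hT
  have hTnonneg : ∀ ω, 0 ≤ T ω := fun ω =>
    Finset.sum_nonneg fun _ _ => Finset.sum_nonneg fun _ _ => sq_nonneg _
  have hTint : Integrable T μ := by
    apply integrable_finset_sum
    intro i _
    apply integrable_finset_sum
    intro j _
    have : (fun ω => (L ω i j - A i j) ^ 2)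
        = fun ω => (L ω i j) ^ 2 - (2 * A i j) * L ω i j + (A i j) ^ 2 := by
      funext ω; ring
    rw [this]
    exact ((hL2 i j).sub ((hLint i j).const_mul _)).add (integrable_const _)
  -- pointwise Cauchy–Schwarz bound
  have hptwise : ∀ k ω, frobM (Φstar k ω) ^ 2
      ≤ (∑ i, ∑ a, ‖m i (k - 1) a‖ ^ 2) * T ω := by
    intro k ω
    rw [sq_frobM_eq]
    have hterm : ∀ (a : Fin d) (j : Fin J), ‖Φstar k ω a j‖ ^ 2 ≤
        (∑ i, ‖m i (k - 1) a‖ ^ 2) * (∑ i, (L ω i j - A i j) ^ 2) := by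
      intro a j
      rw [hswap k ω a j]
      calc ‖∑ i, m i (k - 1) a * (((L ω i j - A i j : ℝ)) : ℂ)‖ ^ 2
          ≤ (∑ i, ‖m i (k - 1) a * (((L ω i j - A i j : ℝ)) : ℂ)‖) ^ 2 := by
            apply pow_le_pow_left₀ (norm_nonneg _)
            exact norm_sum_le _ _
        _ = (∑ i, ‖m i (k - 1) a‖ * |L ω i j - A i j|) ^ 2 := by
            refine congrArg (· ^ 2) (Finset.sum_congr rfl fun i _ => ?_)
            rw [norm_mul, Complex.norm_real, Real.norm_eq_abs]
        _ ≤ (∑ i, ‖m i (k - 1) a‖ ^ 2) * (∑ i, |L ω i j - A i j| ^ 2) :=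
            Finset.sum_mul_sq_le_sq_mul_sq _ _ _
        _ = (∑ i, ‖m i (k - 1) a‖ ^ 2) * (∑ i, (L ω i j - A i j) ^ 2) := by
            simp [sq_abs]
    calc ∑ a, ∑ j, ‖Φstar k ω a j‖ ^ 2
        ≤ ∑ a, ∑ j, (∑ i, ‖m i (k - 1) a‖ ^ 2) * (∑ i, (L ω i j - A i j) ^ 2) :=
          Finset.sum_le_sum fun a _ => Finset.sum_le_sum fun j _ => hterm a j
      _ = (∑ a, ∑ i, ‖m i (k - 1) a‖ ^ 2) * (∑ j, ∑ i, (L ω i j - A i j) ^ 2) := by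
          rw [Finset.sum_mul_sum]
      _ = (∑ i, ∑ a, ‖m i (k - 1) a‖ ^ 2) * T ω := by
          rw [Finset.sum_comm, hT]
          congr 1
          exact Finset.sum_comm
  -- integral bound
  set K : ℝ := ∫ ω, T ω ∂μ with hK
  have hib : ∀ k : ℤ, (∫ ω, frobM (Φstar k ω) ^ 2 ∂μ)
      ≤ (∑ i, ∑ a, ‖m i (k - 1) a‖ ^ 2) * K := by
    intro k
    rw [hK, ← integral_const_mul]
    apply integral_mono_of_nonneg
    · filter_upwards with ω using sq_nonneg _
    · exact hTint.const_mul _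
    · filter_upwards with ω using hptwise k ω
  -- summability of the majorant
  have hmaj : Summable (fun k : ℤ =>
      (∑ i, ∑ a, ‖m i (k - 1) a‖ ^ 2) * K * ρ ^ (-k)) := by
    have h1 : ∀ i : Fin J, Summable (fun k : ℤ =>
        (∑ a, ‖m i (k - 1) a‖ ^ 2) * ρ ^ (-k)) := by
      intro i
      have h2 : Summable (fun k : ℤ =>
          ((∑ a, ‖m i (k - 1) a‖ ^ 2) * ρ ^ (-(k - 1))) * ρ ^ (-1 : ℤ)) :=
        ((hmoment i).comp_injective (fun x y h => by dsimp at h; omega :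
          Function.Injective (fun k : ℤ => k - 1))).mul_right _
      refine h2.congr fun k => ?_
      rw [mul_assoc, ← zpow_add₀ (ne_of_gt hρ0)]
      congr 2
      ring
    have h3 : Summable (fun k : ℤ =>
        ∑ i, ((∑ a, ‖m i (k - 1) a‖ ^ 2) * ρ ^ (-k)) * K) :=
      summable_sum fun i _ => (h1 i).mul_right K
    refine h3.congr fun k => ?_
    rw [← Finset.sum_mul, ← Finset.sum_mul]
    ring
  -- conclude
  refine Summable.of_nonneg_of_le (fun k => ?_) (fun k => ?_) hmaj
  · exact mul_nonneg (integral_nonneg fun ω => sq_nonneg _) (zpow_nonneg hρ0.le _)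
  · calc (∫ ω, frobM (Φstar k ω) ^ 2 ∂μ) * ρ ^ (-k)
        ≤ ((∑ i, ∑ a, ‖m i (k - 1) a‖ ^ 2) * K) * ρ ^ (-k) :=
          mul_le_mul_of_nonneg_right (hib k) (zpow_nonneg hρ0.le _)
      _ = (∑ i, ∑ a, ‖m i (k - 1) a‖ ^ 2) * K * ρ ^ (-k) := by ring

end
end

section
/- Let Φ : ℤ → ℂ^{1×J} be deterministic with Σ_{k∈ℤ}‖Φ(k)‖(ρ^{-k}+ϑ^{-k}) < ∞ for some ϑ < √ρ, let i ∈ {1,2}, x_i := Σ_{k∈ℤ} Φ(k) π⁽ⁱ⁾ A_i^{-k}, and define Ψ_i(k) := (Φ(k) − 1_{k=0} x_i) π⁽ⁱ⁾. Then there is a constant C such that |E[Z_n^{Ψ_i}]| ≤ C (ρ^n ∧ ϑ^n) for all n ∈ ℤ; in particular the expectation of Z_n^{Ψ_i} = Z_n^{Φπ⁽ⁱ⁾} − x_i π⁽ⁱ⁾ Z_n is O(ϑ^n) as n → ∞. -/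
open Filter

noncomputable section

/-- integer powers of a square complex matrix (via `Matrix.inv` for negative exponents). -/
def zpowM {J : ℕ} (M : Matrix (Fin J) (Fin J) ℂ) (k : ℤ) : Matrix (Fin J) (Fin J) ℂ :=
  if 0 ≤ k then M ^ k.toNat else M⁻¹ ^ (-k).toNat

/-- `x` is a generalized eigenvector of `M` for `lam` (or zero). -/
def IsGenEig {J : ℕ} (M : Matrix (Fin J) (Fin J) ℂ) (lam : ℂ) (x : Fin J → ℂ) : Prop :=
  ((lam • (1 : Matrix (Fin J) (Fin J) ℂ) - M) ^ J).mulVec x = 0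

/-- `P` is the spectral projection of `M` onto the generalized eigenspaces of the
eigenvalues satisfying `pred`, along the remaining generalized eigenspaces. -/
def IsSpecProj {J : ℕ} (M P : Matrix (Fin J) (Fin J) ℂ) (pred : ℂ → Prop) : Prop :=
  ∀ lam x, IsGenEig M lam x → (pred lam → P.mulVec x = x) ∧ (¬ pred lam → P.mulVec x = 0)

attribute [local instance] Matrix.frobeniusNormedAddCommGroup Matrix.frobeniusNormedRing
  Matrix.frobeniusNormedAlgebra

namespace EDB

variable {J : ℕ}

lemma frobV_nonneg (v : Fin J → ℂ) : 0 ≤ frobV v := Real.sqrt_nonneg _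

lemma norm_matrix_eq (M : Matrix (Fin J) (Fin J) ℂ) :
    ‖M‖ = Real.sqrt (∑ i, ∑ j, ‖M i j‖ ^ 2) := by
  rw [Matrix.frobenius_norm_def, Real.sqrt_eq_rpow]
  norm_num

lemma abs_dotProduct_le (v w : Fin J → ℂ) :
    ‖dotProduct v w‖ ≤ frobV v * frobV w := by
  have h1 : ‖dotProduct v w‖ ≤ ∑ i, ‖v i‖ * ‖w i‖ := by
    refine (norm_sum_le _ _).trans_eq ?_
    simp [dotProduct]
  refine h1.trans ?_
  have h2 : (∑ i, ‖v i‖ * ‖w i‖) ^ 2 ≤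
      (∑ i, ‖v i‖ ^ 2) * (∑ i, ‖w i‖ ^ 2) :=
    Finset.sum_mul_sq_le_sq_mul_sq _ _ _
  have h3 : (0:ℝ) ≤ ∑ i, ‖v i‖ * ‖w i‖ :=
    Finset.sum_nonneg fun i _ => mul_nonneg (norm_nonneg _) (norm_nonneg _)
  unfold frobV
  rw [← Real.sqrt_mul (Finset.sum_nonneg fun i _ => sq_nonneg _)]
  exact (Real.le_sqrt h3 (by positivity)).mpr h2

lemma frobV_mulVec (M : Matrix (Fin J) (Fin J) ℂ) (w : Fin J → ℂ) :
    frobV (M.mulVec w) ≤ ‖M‖ * frobV w := by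
  have h1 : ∀ i, ‖M.mulVec w i‖ ≤ frobV (fun j => M i j) * frobV w :=
    fun i => abs_dotProduct_le _ _
  have h2 : frobV (M.mulVec w) ≤
      Real.sqrt (∑ i, (frobV (fun j => M i j) * frobV w) ^ 2) := by
    apply Real.sqrt_le_sqrt
    apply Finset.sum_le_sum
    intro i _
    exact pow_le_pow_left₀ (norm_nonneg _) (h1 i) 2
  refine h2.trans (le_of_eq ?_)
  have h3 : ∑ i, (frobV (fun j => M i j) * frobV w) ^ 2
      = (∑ i, ∑ j, ‖M i j‖ ^ 2) * (frobV w) ^ 2 := by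
    rw [Finset.sum_mul]
    refine Finset.sum_congr rfl fun i _ => ?_
    rw [mul_pow]
    congr 1
    unfold frobV
    exact Real.sq_sqrt (Finset.sum_nonneg fun j _ => sq_nonneg _)
  rw [h3, Real.sqrt_mul (Finset.sum_nonneg fun i _ => Finset.sum_nonneg fun j _ => sq_nonneg _),
    Real.sqrt_sq (frobV_nonneg w), norm_matrix_eq]

lemma frobV_vecMul (v : Fin J → ℂ) (M : Matrix (Fin J) (Fin J) ℂ) :
    frobV (Matrix.vecMul v M) ≤ frobV v * ‖M‖ := by
  rw [← Matrix.mulVec_transpose, ← Matrix.frobenius_norm_transpose M]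
  exact (frobV_mulVec _ _).trans_eq (mul_comm _ _)

lemma abs_dot_mulVec_le (v : Fin J → ℂ) (M : Matrix (Fin J) (Fin J) ℂ) (w : Fin J → ℂ) :
    ‖dotProduct v (M.mulVec w)‖ ≤ frobV v * (‖M‖ * frobV w) :=
  (abs_dotProduct_le _ _).trans (mul_le_mul_of_nonneg_left (frobV_mulVec M w) (frobV_nonneg v))

lemma pi_norm_le_frobV (v : Fin J → ℂ) : ‖v‖ ≤ frobV v := by
  refine (pi_norm_le_iff_of_nonneg (frobV_nonneg v)).mpr fun i => ?_
  rw [← Real.sqrt_sq (norm_nonneg (v i))]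
  exact Real.sqrt_le_sqrt (Finset.single_le_sum (f := fun j => ‖v j‖ ^ 2)
    (fun j _ => sq_nonneg _) (Finset.mem_univ i))

lemma gelfand_bound (B : Matrix (Fin J) (Fin J) ℂ) {r : ℝ} (hr : 0 < r)
    (hs : spectralRadius ℂ B < ENNReal.ofReal r) :
    ∃ C : ℝ, 0 ≤ C ∧ ∀ m : ℕ, ‖B ^ m‖ ≤ C * r ^ m := by
  have ht := spectrum.pow_nnnorm_pow_one_div_tendsto_nhds_spectralRadius
    (A := Matrix (Fin J) (Fin J) ℂ) B
  have hev := ht.eventually_lt_const hs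
  rw [eventually_atTop] at hev
  obtain ⟨N, hN⟩ := hev
  have hbig : ∀ m, N + 1 ≤ m → ‖B ^ m‖ ≤ r ^ m := by
    intro m hm
    have h1 := hN m (le_trans (Nat.le_succ N) hm)
    have hm0 : (m:ℝ) ≠ 0 := Nat.cast_ne_zero.mpr (by omega)
    have h2 : (‖B ^ m‖₊ : ENNReal) < (ENNReal.ofReal r) ^ (m:ℝ) := by
      calc (‖B ^ m‖₊ : ENNReal) = ((‖B ^ m‖₊ : ENNReal) ^ (1/(m:ℝ))) ^ (m:ℝ) := by
            rw [← ENNReal.rpow_mul, one_div, inv_mul_cancel₀ hm0, ENNReal.rpow_one]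
        _ < (ENNReal.ofReal r) ^ (m:ℝ) :=
            ENNReal.rpow_lt_rpow h1 (by positivity)
    rw [ENNReal.ofReal_rpow_of_pos hr, Real.rpow_natCast] at h2
    have h3 : ‖B ^ m‖₊ < (r ^ m).toNNReal := by
      rwa [ENNReal.ofReal, ENNReal.coe_lt_coe] at h2
    calc ‖B ^ m‖ = ((‖B ^ m‖₊ : NNReal) : ℝ) := rfl
      _ ≤ (((r ^ m).toNNReal : NNReal) : ℝ) := by exact_mod_cast h3.le
      _ = r ^ m := Real.coe_toNNReal _ (by positivity)
  refine ⟨(∑ i ∈ Finset.range (N + 2), ‖B ^ i‖ * (r⁻¹) ^ i) + 1, by positivity, fun m => ?_⟩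
  have hS : (0:ℝ) ≤ ∑ i ∈ Finset.range (N + 2), ‖B ^ i‖ * (r⁻¹) ^ i :=
    Finset.sum_nonneg fun i _ => by positivity
  rcases lt_or_ge m (N + 2) with hm | hm
  · have hterm : ‖B ^ m‖ * (r⁻¹) ^ m ≤ ∑ i ∈ Finset.range (N + 2), ‖B ^ i‖ * (r⁻¹) ^ i :=
      Finset.single_le_sum (f := fun i => ‖B ^ i‖ * (r⁻¹) ^ i)
        (fun i _ => by positivity) (Finset.mem_range.mpr hm)
    have heq : ‖B ^ m‖ = (‖B ^ m‖ * (r⁻¹) ^ m) * r ^ m := by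
      rw [inv_pow, mul_assoc, inv_mul_cancel₀ (pow_ne_zero _ hr.ne'), mul_one]
    rw [heq]
    have h5 : ‖B ^ m‖ * (r⁻¹) ^ m ≤ (∑ i ∈ Finset.range (N + 2), ‖B ^ i‖ * (r⁻¹) ^ i) + 1 := by
      linarith
    exact mul_le_mul_of_nonneg_right h5 (by positivity)
  · refine (hbig m (by omega)).trans ?_
    have : (1:ℝ) * r ^ m ≤ ((∑ i ∈ Finset.range (N + 2), ‖B ^ i‖ * (r⁻¹) ^ i) + 1) * r ^ m :=
      mul_le_mul_of_nonneg_right (by linarith) (by positivity)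
    simpa using this

lemma pow_entry_nonneg (A : Matrix (Fin J) (Fin J) ℝ) (hA : ∀ i j, 0 ≤ A i j) :
    ∀ (m : ℕ) (i j : Fin J), 0 ≤ (A ^ m) i j := by
  intro m
  induction m with
  | zero => intro i j; rcases eq_or_ne i j with h | h <;> simp [pow_zero, Matrix.one_apply, h]
  | succ m ih =>
      intro i j
      rw [pow_succ, Matrix.mul_apply]
      exact Finset.sum_nonneg fun l _ => mul_nonneg (ih i l) (hA l j)

lemma pow_mulVec_eig {A : Matrix (Fin J) (Fin J) ℝ} {ρ : ℝ} {u : Fin J → ℝ}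
    (heig : A.mulVec u = ρ • u) : ∀ m : ℕ, (A ^ m).mulVec u = (ρ ^ m) • u := by
  intro m
  induction m with
  | zero => simp [Matrix.one_mulVec]
  | succ m ih =>
      rw [pow_succ' A m, ← Matrix.mulVec_mulVec, ih, Matrix.mulVec_smul, heig,
        smul_smul, ← pow_succ]

lemma perron_norm_bound (A : Matrix (Fin J) (Fin J) ℝ) (hA : ∀ i j, 0 ≤ A i j)
    {ρ : ℝ} {u : Fin J → ℝ} (hu : ∀ j, 0 < u j) (heig : A.mulVec u = ρ • u) (hρ0 : 0 ≤ ρ) :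
    ∃ CA : ℝ, 0 ≤ CA ∧ ∀ m : ℕ, ‖(A.map (fun a => (a : ℂ))) ^ m‖ ≤ CA * ρ ^ m := by
  have hmap : ∀ m : ℕ, (A.map (fun a => (a : ℂ))) ^ m = (A ^ m).map (fun a => (a : ℂ)) := by
    intro m
    have h0 : A.map (fun a => (a : ℂ)) = (Complex.ofRealHom.mapMatrix) A := rfl
    rw [h0, ← map_pow]
    rfl
  have hentry : ∀ (m : ℕ) (i j : Fin J), (A ^ m) i j ≤ ρ ^ m * (u i / u j) := by
    intro m i j
    have h1 : (A ^ m) i j * u j ≤ ∑ l, (A ^ m) i l * u l :=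
      Finset.single_le_sum (f := fun l => (A ^ m) i l * u l)
        (fun l _ => mul_nonneg (pow_entry_nonneg A hA m i l) (hu l).le) (Finset.mem_univ j)
    have h2 : ∑ l, (A ^ m) i l * u l = ρ ^ m * u i := by
      have := congrFun (pow_mulVec_eig heig m) i
      simpa [Matrix.mulVec, dotProduct] using this
    rw [h2] at h1
    rw [mul_div_assoc'] at *
    exact (le_div_iff₀ (hu j)).mpr h1
  refine ⟨Real.sqrt (∑ i, ∑ j, (u i / u j) ^ 2), Real.sqrt_nonneg _, fun m => ?_⟩
  rw [hmap, norm_matrix_eq]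
  have h3 : (∑ i, ∑ j, ‖(((A ^ m) i j : ℝ) : ℂ)‖ ^ 2)
      ≤ ∑ i, ∑ j, (ρ ^ m * (u i / u j)) ^ 2 := by
    refine Finset.sum_le_sum fun i _ => Finset.sum_le_sum fun j _ => ?_
    rw [Complex.norm_real, Real.norm_eq_abs, abs_of_nonneg (pow_entry_nonneg A hA m i j)]
    exact pow_le_pow_left₀ (pow_entry_nonneg A hA m i j) (hentry m i j) 2
  have h4 : ∑ i, ∑ j, (ρ ^ m * (u i / u j)) ^ 2
      = (ρ ^ m) ^ 2 * ∑ i, ∑ j, (u i / u j) ^ 2 := by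
    simp_rw [mul_pow, Finset.mul_sum]
  calc Real.sqrt (∑ i, ∑ j, ‖((A ^ m).map (fun a => (a : ℂ))) i j‖ ^ 2)
      = Real.sqrt (∑ i, ∑ j, ‖(((A ^ m) i j : ℝ) : ℂ)‖ ^ 2) := rfl
    _ ≤ Real.sqrt ((ρ ^ m) ^ 2 * ∑ i, ∑ j, (u i / u j) ^ 2) := by
        rw [← h4]; exact Real.sqrt_le_sqrt h3
    _ = ρ ^ m * Real.sqrt (∑ i, ∑ j, (u i / u j) ^ 2) := by
        rw [Real.sqrt_mul (sq_nonneg _), Real.sqrt_sq (by positivity)]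
    _ = Real.sqrt (∑ i, ∑ j, (u i / u j) ^ 2) * ρ ^ m := mul_comm _ _

lemma isGenEig_of_mem_maxGen {Ac : Matrix (Fin J) (Fin J) ℂ} {μ : ℂ} {x : Fin J → ℂ}
    (hx : x ∈ Module.End.maxGenEigenspace (Matrix.toLinAlgEquiv' Ac) μ) : IsGenEig Ac μ x := by
  rw [Module.End.maxGenEigenspace_eq_genEigenspace_finrank, Module.End.mem_genEigenspace_nat,
    LinearMap.mem_ker] at hx
  have hrk : Module.finrank ℂ (Fin J → ℂ) = J := Module.finrank_fin_fun ℂ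
  rw [hrk] at hx
  unfold IsGenEig
  have key : ((μ • (1 : Matrix (Fin J) (Fin J) ℂ) - Ac) ^ J).mulVec x
      = Matrix.toLinAlgEquiv' ((μ • (1 : Matrix (Fin J) (Fin J) ℂ) - Ac) ^ J) x := rfl
  rw [key, map_pow, map_sub, map_smul, map_one]
  have hneg : (μ • (1 : Module.End ℂ (Fin J → ℂ)) - Matrix.toLinAlgEquiv' Ac) ^ J
      = (-1 : Module.End ℂ (Fin J → ℂ)) ^ J *
        (Matrix.toLinAlgEquiv' Ac - μ • (1 : Module.End ℂ (Fin J → ℂ))) ^ J := by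
    rw [← neg_sub (Matrix.toLinAlgEquiv' Ac) (μ • (1 : Module.End ℂ (Fin J → ℂ)))]
    exact neg_pow (Matrix.toLinAlgEquiv' Ac - μ • (1 : Module.End ℂ (Fin J → ℂ))) J
  rw [hneg, Module.End.mul_apply, hx, map_zero]

lemma matrix_eq_of_genEig (Ac P Q : Matrix (Fin J) (Fin J) ℂ)
    (h : ∀ μ x, IsGenEig Ac μ x → P.mulVec x = Q.mulVec x) : P = Q := by
  have key : ∀ x : Fin J → ℂ, P.mulVec x = Q.mulVec x := by
    intro x
    have hx : x ∈ ⨆ μ : ℂ, Module.End.maxGenEigenspace (Matrix.toLinAlgEquiv' Ac) μ := by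
      rw [Module.End.iSup_maxGenEigenspace_eq_top]; trivial
    refine Submodule.iSup_induction (motive := fun y => P.mulVec y = Q.mulVec y) _ hx
      (fun μ y hy => h μ y (isGenEig_of_mem_maxGen hy)) (by simp) ?_
    intro y z hy hz
    simp [Matrix.mulVec_add, hy, hz]
  ext i j
  have := congrFun (key (Pi.single j 1)) i
  simpa [Matrix.mulVec_single] using this

lemma pow_mulVec_eq_zero (hJ : 0 < J) {N : Matrix (Fin J) (Fin J) ℂ} {w : Fin J → ℂ}
    (h : N.mulVec w = 0) : (N ^ J).mulVec w = 0 := by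
  obtain ⟨J', rfl⟩ : ∃ J', J = J' + 1 := ⟨J - 1, by omega⟩
  rw [pow_succ, ← Matrix.mulVec_mulVec, h, Matrix.mulVec_zero]

end EDB

/-- for `i ∈ {1,2}`, `x_i := Σ_k Φ(k) π⁽ⁱ⁾ A_i^{-k}` and
`Ψ_i(k) := (Φ(k) − 1_{k=0} x_i) π⁽ⁱ⁾`, the expectation of the branching process counted
with `Ψ_i`, namely `E[Z_n^{Ψ_i}] = Σ_{k ≤ n} Ψ_i(k) A^{n-k} Z_0`, satisfies
`|E[Z_n^{Ψ_i}]| ≤ C (ρ^n ∧ ϑ^n)` for all `n ∈ ℤ`. -/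
theorem expectation_difference_bound
    {J : ℕ} (A : Matrix (Fin J) (Fin J) ℝ) (ρ ϑ : ℝ) (uvec : Fin J → ℝ)
    (hAnn : ∀ i j, 0 ≤ A i j)
    (hρ : 1 < ρ)
    (hposreg : ∃ n, ∀ i j, 0 < (A ^ n) i j)
    (hu : ∀ j, 0 < uvec j)
    (heig : A.mulVec uvec = ρ • uvec)
    (hϑpos : 0 < ϑ) (hϑ : ϑ < Real.sqrt ρ)
    (Φ : ℤ → Fin J → ℂ)
    (hΦ : Summable fun k : ℤ => frobV (Φ k) * (ρ ^ (-k) + ϑ ^ (-k)))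
    (Ac π AP : Matrix (Fin J) (Fin J) ℂ)
    (hAc : Ac = A.map (fun a => (a : ℂ)))
    (hcase : IsSpecProj Ac π (fun z => Real.sqrt ρ < ‖z‖) ∨
      IsSpecProj Ac π (fun z => ‖z‖ = Real.sqrt ρ))
    (hAP : AP = Ac * π + (1 - π))
    (xi : Fin J → ℂ)
    (hxi : xi = ∑' k : ℤ, Matrix.vecMul (Matrix.vecMul (Φ k) π) (zpowM AP (-k)))
    (Ψ : ℤ → Fin J → ℂ)
    (hΨ : ∀ k, Ψ k = Matrix.vecMul (fun j => Φ k j - if k = 0 then xi j else 0) π)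
    (Z0 : Fin J → ℝ) (hZ0 : ∀ j, 0 ≤ Z0 j)
    (EZ : ℤ → ℂ)
    (hEZ : ∀ n, EZ n = ∑' m : ℕ,
      ∑ j, Ψ (n - m) j * (((A ^ m).mulVec Z0 j : ℝ) : ℂ)) :
    ∃ C : ℝ, ∀ n : ℤ, ‖EZ n‖ ≤ C * min (ρ ^ n) (ϑ ^ n) := by
  classical
  rcases Nat.eq_zero_or_pos J with hJ0 | hJpos
  · refine ⟨0, fun n => ?_⟩
    have h0 : EZ n = 0 := by
      rw [hEZ n]
      subst hJ0
      simp
    rw [h0]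
    simp
  -- basic positivity
  have hρ0 : (0:ℝ) < ρ := lt_trans one_pos hρ
  have hsρ0 : (0:ℝ) < Real.sqrt ρ := Real.sqrt_pos.mpr hρ0
  have hsρρ : Real.sqrt ρ ≤ ρ := by
    have h := Real.sqrt_le_sqrt (show ρ ≤ ρ ^ 2 by nlinarith)
    rwa [Real.sqrt_sq hρ0.le] at h
  have hϑρ : ϑ < ρ := lt_of_lt_of_le hϑ hsρρ
  -- extract predicate
  obtain ⟨pred, hspec, hpredge, hpred0⟩ :
      ∃ pred : ℂ → Prop, IsSpecProj Ac π pred ∧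
        (∀ lam, pred lam → Real.sqrt ρ ≤ ‖lam‖) ∧ ¬ pred 0 := by
    rcases hcase with h | h
    · refine ⟨_, h, fun lam hl => hl.le, ?_⟩
      simp only [norm_zero]
      exact not_lt.mpr hsρ0.le
    · refine ⟨_, h, fun lam hl => hl.ge, ?_⟩
      simp only [norm_zero]
      exact fun h0 => absurd h0.symm (ne_of_gt hsρ0)
  -- generalized eigenvectors are stable under Ac
  have hgenAc : ∀ (μ : ℂ) (x : Fin J → ℂ), IsGenEig Ac μ x → IsGenEig Ac μ (Ac.mulVec x) := by
    intro μ x hx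
    unfold IsGenEig at hx ⊢
    have hcom : Commute ((μ • (1 : Matrix (Fin J) (Fin J) ℂ) - Ac) ^ J) Ac :=
      (((Commute.one_left Ac).smul_left μ).sub_left (Commute.refl Ac)).pow_left J
    rw [Matrix.mulVec_mulVec, hcom.eq, ← Matrix.mulVec_mulVec, hx, Matrix.mulVec_zero]
  -- π is idempotent and commutes with Ac
  have hπ2 : π * π = π := by
    apply EDB.matrix_eq_of_genEig Ac
    intro μ x hx
    rw [← Matrix.mulVec_mulVec]
    by_cases hp : pred μ
    · rw [(hspec μ x hx).1 hp, (hspec μ x hx).1 hp]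
    · rw [(hspec μ x hx).2 hp, Matrix.mulVec_zero]
  have hcommAcπ : π * Ac = Ac * π := by
    apply EDB.matrix_eq_of_genEig Ac
    intro μ x hx
    rw [← Matrix.mulVec_mulVec, ← Matrix.mulVec_mulVec]
    by_cases hp : pred μ
    · rw [(hspec μ x hx).1 hp, (hspec μ (Ac.mulVec x) (hgenAc μ x hx)).1 hp]
    · rw [(hspec μ x hx).2 hp, (hspec μ (Ac.mulVec x) (hgenAc μ x hx)).2 hp,
        Matrix.mulVec_zero]
  have hAPπ : AP * π = Ac * π := by
    rw [hAP]
    have h : (Ac * π + (1 - π)) * π = Ac * (π * π) + (π - π * π) := by noncomm_ring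
    rw [h, hπ2]
    simp
  have hπAP : π * AP = Ac * π := by
    rw [hAP]
    have h : π * (Ac * π + (1 - π)) = π * Ac * π + (π - π * π) := by noncomm_ring
    rw [h, hπ2, hcommAcπ, mul_assoc, hπ2]
    simp
  -- AP in terms of mulVec
  have hmulVecAP : ∀ v : Fin J → ℂ,
      AP.mulVec v = Ac.mulVec (π.mulVec v) + v - π.mulVec v := by
    intro v
    rw [hAP, Matrix.add_mulVec, Matrix.sub_mulVec, Matrix.one_mulVec, ← Matrix.mulVec_mulVec]
    abel
  -- AP is invertible
  have hAPunit : IsUnit AP := by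
    have hinj : ∀ v : Fin J → ℂ, AP.mulVec v = 0 → v = 0 := by
      intro v hv
      have hπv0 : π.mulVec v = 0 := by
        set w := π.mulVec v with hw
        have hπw : π.mulVec w = w := by
          rw [hw, Matrix.mulVec_mulVec, hπ2]
        have hAcw : Ac.mulVec w = 0 := by
          have h1 : π.mulVec (AP.mulVec v) = 0 := by rw [hv, Matrix.mulVec_zero]
          rw [Matrix.mulVec_mulVec, hπAP, ← Matrix.mulVec_mulVec] at h1
          exact h1
        have hgen0 : IsGenEig Ac 0 w := by
          unfold IsGenEig
          rw [zero_smul, zero_sub]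
          apply EDB.pow_mulVec_eq_zero hJpos
          rw [Matrix.neg_mulVec, hAcw, neg_zero]
        have hzero := (hspec 0 w hgen0).2 hpred0
        rw [hπw] at hzero
        exact hzero
      have h2 := hmulVecAP v
      rw [hv, hπv0, Matrix.mulVec_zero] at h2
      simpa using h2.symm
    rw [Matrix.isUnit_iff_isUnit_det, isUnit_iff_ne_zero]
    intro hdet
    obtain ⟨v, hv0, hveq⟩ := Matrix.exists_mulVec_eq_zero_iff.mpr hdet
    exact hv0 (hinj v hveq)
  set u : (Matrix (Fin J) (Fin J) ℂ)ˣ := hAPunit.unit with hu_def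
  have huAP : (u : Matrix (Fin J) (Fin J) ℂ) = AP := hAPunit.unit_spec
  set U : ℤ → Matrix (Fin J) (Fin J) ℂ :=
    fun k => ((u ^ k : (Matrix (Fin J) (Fin J) ℂ)ˣ) : Matrix (Fin J) (Fin J) ℂ) with hU_def
  have hU_mul : ∀ a b : ℤ, U a * U b = U (a + b) := by
    intro a b
    show ((u ^ a : (Matrix (Fin J) (Fin J) ℂ)ˣ) : Matrix (Fin J) (Fin J) ℂ)
        * ((u ^ b : (Matrix (Fin J) (Fin J) ℂ)ˣ) : Matrix (Fin J) (Fin J) ℂ)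
        = ((u ^ (a + b) : (Matrix (Fin J) (Fin J) ℂ)ˣ) : Matrix (Fin J) (Fin J) ℂ)
    rw [← Units.val_mul, ← zpow_add]
  have hU0 : U 0 = 1 := by
    show ((u ^ (0:ℤ) : (Matrix (Fin J) (Fin J) ℂ)ˣ) : Matrix (Fin J) (Fin J) ℂ) = 1
    rw [zpow_zero, Units.val_one]
  have hU1 : U 1 = AP := by
    show ((u ^ (1:ℤ) : (Matrix (Fin J) (Fin J) ℂ)ˣ) : Matrix (Fin J) (Fin J) ℂ) = AP
    rw [zpow_one, huAP]
  have hcommπu : Commute π (u : Matrix (Fin J) (Fin J) ℂ) := by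
    unfold Commute SemiconjBy
    rw [huAP, hπAP, hAPπ]
  have hcommπU : ∀ k : ℤ, Commute π (U k) := fun k => Commute.units_zpow_right hcommπu k
  set Mk : ℤ → Matrix (Fin J) (Fin J) ℂ := fun k => π * U k with hMk_def
  have hMk_mul : ∀ a b : ℤ, Mk a * Mk b = Mk (a + b) := by
    intro a b
    show π * U a * (π * U b) = π * U (a + b)
    have h1 : π * U a * (π * U b) = π * (U a * π) * U b := by noncomm_ring
    rw [h1, ← (hcommπU a).eq]
    have h2 : π * (π * U a) * U b = (π * π) * (U a * U b) := by noncomm_ring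
    rw [h2, hπ2, hU_mul]
  have hMk_nat : ∀ m : ℕ, π * Ac ^ m = Mk (m : ℤ) := by
    intro m
    induction m with
    | zero =>
        show π * Ac ^ 0 = π * U ((0:ℕ) : ℤ)
        rw [pow_zero, Nat.cast_zero, hU0]
    | succ m ih =>
        show π * Ac ^ (m + 1) = π * U (((m+1:ℕ)) : ℤ)
        have hc : ((m+1:ℕ) : ℤ) = 1 + (m:ℤ) := by push_cast; ring
        calc π * Ac ^ (m + 1) = (π * Ac) * Ac ^ m := by rw [pow_succ']; noncomm_ring
          _ = (AP * π) * Ac ^ m := by rw [hcommAcπ, ← hAPπ]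
          _ = AP * (π * Ac ^ m) := by rw [mul_assoc]
          _ = AP * (π * U (m:ℤ)) := by rw [ih]
          _ = (AP * π) * U (m:ℤ) := by rw [mul_assoc]
          _ = (π * AP) * U (m:ℤ) := by rw [hAPπ, ← hπAP]
          _ = π * (AP * U (m:ℤ)) := by rw [mul_assoc]
          _ = π * (U 1 * U (m:ℤ)) := by rw [hU1]
          _ = π * U (1 + (m:ℤ)) := by rw [hU_mul]
          _ = π * U (((m+1:ℕ)) : ℤ) := by rw [hc]
  set B : Matrix (Fin J) (Fin J) ℂ := π * U (-1) with hB_def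
  have hMk_neg : ∀ m : ℕ, Mk (-(m:ℤ)) = π * B ^ m := by
    intro m
    induction m with
    | zero =>
        show π * U (-((0:ℕ):ℤ)) = π * B ^ 0
        have h42 : (-((0:ℕ):ℤ)) = 0 := by norm_num
        rw [pow_zero, mul_one, h42, hU0, mul_one]
    | succ m ih =>
        have h3 : (-((m+1:ℕ):ℤ)) = -(m:ℤ) + -1 := by push_cast; ring
        calc Mk (-((m+1:ℕ):ℤ)) = Mk (-(m:ℤ) + -1) := by rw [h3]
          _ = Mk (-(m:ℤ)) * Mk (-1) := (hMk_mul _ _).symm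
          _ = (π * B ^ m) * B := by rw [ih]
          _ = π * B ^ (m+1) := by rw [pow_succ, mul_assoc]
  -- Perron bound for Ac powers
  obtain ⟨CA, hCA0, hCA⟩ := EDB.perron_norm_bound A hAnn hu heig hρ0.le
  have hAcpow : ∀ m : ℕ, ‖Ac ^ m‖ ≤ CA * ρ ^ m := by
    intro m; rw [hAc]; exact hCA m
  -- spectral radius of B
  have hspecB : spectralRadius ℂ B ≤ ENNReal.ofReal (Real.sqrt ρ)⁻¹ := by
    apply iSup₂_le
    intro z hz
    rw [spectrum.mem_iff] at hz
    have hdet : (z • (1 : Matrix (Fin J) (Fin J) ℂ) - B).det = 0 := by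
      by_contra h
      exact hz (by
        rw [Algebra.algebraMap_eq_smul_one]
        exact (Matrix.isUnit_iff_isUnit_det _).mpr (isUnit_iff_ne_zero.mpr h))
    obtain ⟨v, hv0, hveq⟩ := Matrix.exists_mulVec_eq_zero_iff.mpr hdet
    have hBv : B.mulVec v = z • v := by
      rw [Matrix.sub_mulVec, Matrix.smul_mulVec, Matrix.one_mulVec, sub_eq_zero] at hveq
      exact hveq.symm
    have hgoal : ‖z‖ ≤ (Real.sqrt ρ)⁻¹ := by
      rcases eq_or_ne z 0 with hz0 | hz0
      · rw [hz0, norm_zero]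
        positivity
      · have hπv : π.mulVec v = v := by
          have h1 : π.mulVec (B.mulVec v) = B.mulVec v := by
            rw [Matrix.mulVec_mulVec]
            have hπB : π * B = B := by
              rw [hB_def, ← mul_assoc, hπ2]
            rw [hπB]
          rw [hBv, Matrix.mulVec_smul] at h1
          exact smul_right_injective (Fin J → ℂ) hz0 h1
        have hAPB : AP * B = π := by
          have hc : AP * π = π * AP := by rw [hAPπ, hπAP]
          have : AP * B = π * (U 1 * U (-1)) := by
            rw [hB_def, ← mul_assoc, hc, mul_assoc, hU1]
          have h41 : (1:ℤ) + -1 = 0 := by norm_num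
          rw [this, hU_mul, h41, hU0, mul_one]
        have hAPv : AP.mulVec v = z⁻¹ • v := by
          have h1 : AP.mulVec (B.mulVec v) = v := by
            rw [Matrix.mulVec_mulVec, hAPB, hπv]
          rw [hBv, Matrix.mulVec_smul] at h1
          have h2 := congrArg (fun x => z⁻¹ • x) h1
          simpa [smul_smul, inv_mul_cancel₀ hz0] using h2
        have hAcv : Ac.mulVec v = z⁻¹ • v := by
          rw [hmulVecAP v, hπv] at hAPv
          simpa using hAPv
        have hgenv : IsGenEig Ac z⁻¹ v := by
          unfold IsGenEig
          apply EDB.pow_mulVec_eq_zero hJpos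
          rw [Matrix.sub_mulVec, Matrix.smul_mulVec, Matrix.one_mulVec, hAcv, sub_self]
        have hpz : pred z⁻¹ := by
          by_contra hp
          exact hv0 (by rw [← hπv]; exact (hspec _ v hgenv).2 hp)
        have h2 : Real.sqrt ρ ≤ ‖z‖⁻¹ := by
          have h3 := hpredge _ hpz
          rwa [norm_inv] at h3
        calc ‖z‖ = (‖z‖⁻¹)⁻¹ := (inv_inv _).symm
          _ ≤ (Real.sqrt ρ)⁻¹ := inv_anti₀ hsρ0 h2
    calc ((‖z‖₊ : NNReal) : ENNReal) = ENNReal.ofReal ‖z‖ := (ofReal_norm z).symm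
      _ ≤ ENNReal.ofReal (Real.sqrt ρ)⁻¹ :=
          ENNReal.ofReal_le_ofReal (by assumption)
  have hlt : spectralRadius ℂ B < ENNReal.ofReal ϑ⁻¹ := by
    refine lt_of_le_of_lt hspecB ?_
    rw [ENNReal.ofReal_lt_ofReal_iff (by positivity)]
    exact inv_strictAnti₀ hϑpos hϑ
  obtain ⟨CB, hCB0, hCB⟩ := EDB.gelfand_bound B (by positivity : (0:ℝ) < ϑ⁻¹) hlt
  -- uniform bound on Mk
  set CM : ℝ := ‖π‖ * (CA + CB) with hCM_def
  have hCM0 : 0 ≤ CM := mul_nonneg (norm_nonneg _) (by linarith)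
  have hMk_bound : ∀ k : ℤ, ‖Mk k‖ ≤ CM * (ρ ^ k + ϑ ^ k) := by
    intro k
    have hρk : (0:ℝ) < ρ ^ k := zpow_pos hρ0 k
    have hϑk : (0:ℝ) < ϑ ^ k := zpow_pos hϑpos k
    rcases le_or_gt 0 k with hk | hk
    · have hkm : ((k.toNat : ℕ) : ℤ) = k := Int.toNat_of_nonneg hk
      have h1 : Mk k = π * Ac ^ k.toNat := by
        rw [← hkm]; exact (hMk_nat k.toNat).symm
      have h2 : ‖Mk k‖ ≤ ‖π‖ * (CA * ρ ^ k.toNat) := by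
        rw [h1]
        exact (norm_mul_le _ _).trans
          (mul_le_mul_of_nonneg_left (hAcpow k.toNat) (norm_nonneg _))
      have h3 : ρ ^ k.toNat = ρ ^ k := by rw [← zpow_natCast ρ k.toNat, hkm]
      rw [h3] at h2
      refine h2.trans ?_
      have e1 : CM * (ρ ^ k + ϑ ^ k)
          = ‖π‖ * (CA * ρ ^ k) + ‖π‖ * CB * ρ ^ k + ‖π‖ * (CA + CB) * ϑ ^ k := by
        rw [hCM_def]; ring
      rw [e1]
      have t1 : 0 ≤ ‖π‖ * CB * ρ ^ k :=
        mul_nonneg (mul_nonneg (norm_nonneg _) hCB0) hρk.le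
      have t2 : 0 ≤ ‖π‖ * (CA + CB) * ϑ ^ k :=
        mul_nonneg (mul_nonneg (norm_nonneg _) (by linarith)) hϑk.le
      linarith
    · have hkm : (((-k).toNat : ℕ) : ℤ) = -k := Int.toNat_of_nonneg (by omega)
      have hkm' : -(((-k).toNat : ℕ) : ℤ) = k := by omega
      have h1 : Mk k = π * B ^ (-k).toNat := by
        have h0 := hMk_neg (-k).toNat
        rwa [hkm'] at h0
      have h2 : ‖Mk k‖ ≤ ‖π‖ * (CB * (ϑ⁻¹) ^ (-k).toNat) := by
        rw [h1]
        exact (norm_mul_le _ _).trans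
          (mul_le_mul_of_nonneg_left (hCB (-k).toNat) (norm_nonneg _))
      have h3 : (ϑ⁻¹) ^ (-k).toNat = ϑ ^ k := by
        rw [inv_pow, ← zpow_natCast ϑ (-k).toNat, hkm, zpow_neg, inv_inv]
      rw [h3] at h2
      refine h2.trans ?_
      have e1 : CM * (ρ ^ k + ϑ ^ k)
          = ‖π‖ * (CB * ϑ ^ k) + ‖π‖ * CA * ϑ ^ k + ‖π‖ * (CA + CB) * ρ ^ k := by
        rw [hCM_def]; ring
      rw [e1]
      have t1 : 0 ≤ ‖π‖ * CA * ϑ ^ k :=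
        mul_nonneg (mul_nonneg (norm_nonneg _) hCA0) hϑk.le
      have t2 : 0 ≤ ‖π‖ * (CA + CB) * ρ ^ k :=
        mul_nonneg (mul_nonneg (norm_nonneg _) (by linarith)) hρk.le
      linarith
  -- summable weight
  set g : ℤ → ℝ := fun k => frobV (Φ k) * (ρ ^ (-k) + ϑ ^ (-k)) with hg_def
  have hg0 : ∀ k, 0 ≤ g k := fun k =>
    mul_nonneg (EDB.frobV_nonneg _)
      (by positivity)
  have hgsum : Summable g := hΦ
  set G : ℝ := ∑' k, g k with hG_def
  have hG0 : 0 ≤ G := tsum_nonneg hg0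
  -- complex initial vector
  set Z0c : Fin J → ℂ := fun j => ((Z0 j : ℝ) : ℂ) with hZ0c_def
  have hcast : ∀ m : ℕ, (Ac ^ m).mulVec Z0c = fun j => (((A ^ m).mulVec Z0 j : ℝ) : ℂ) := by
    intro m
    have hpow : Ac ^ m = (A ^ m).map (fun a => (a : ℂ)) := by
      rw [hAc]
      have h0 : A.map (fun a => (a : ℂ)) = (Complex.ofRealHom.mapMatrix) A := rfl
      rw [h0, ← map_pow]
      rfl
    funext j
    rw [hpow]
    simp only [Matrix.mulVec, dotProduct, Matrix.map_apply, hZ0c_def]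
    push_cast
    rfl
  -- the coefficients
  set c : ℤ → ℤ → ℂ := fun n k => dotProduct (Φ k) ((Mk (n - k)).mulVec Z0c) with hc_def
  have hc_eval : ∀ n k : ℤ, c n k = dotProduct (Φ k) ((Mk (n - k)).mulVec Z0c) :=
    fun n k => rfl
  have hc_bound : ∀ n k : ℤ, ‖c n k‖
      ≤ frobV (Φ k) * ((CM * (ρ ^ (n-k) + ϑ ^ (n-k))) * frobV Z0c) := by
    intro n k
    refine (EDB.abs_dot_mulVec_le _ _ _).trans ?_
    exact mul_le_mul_of_nonneg_left
      (mul_le_mul_of_nonneg_right (hMk_bound (n-k)) (EDB.frobV_nonneg _))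
      (EDB.frobV_nonneg _)
  set D : ℝ := CM * frobV Z0c with hD_def
  have hD0 : 0 ≤ D := mul_nonneg hCM0 (EDB.frobV_nonneg _)
  -- zpow monotonicity in the base
  have hzpow_mono : ∀ e : ℤ, 0 ≤ e → ϑ ^ e ≤ ρ ^ e := by
    intro e he
    have hme : ((e.toNat : ℕ) : ℤ) = e := Int.toNat_of_nonneg he
    rw [← hme, zpow_natCast, zpow_natCast]
    exact pow_le_pow_left₀ hϑpos.le hϑρ.le e.toNat
  have hzpow_mono' : ∀ e : ℤ, e ≤ 0 → ρ ^ e ≤ ϑ ^ e := by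
    intro e he
    have h1 : ϑ ^ (-e) ≤ ρ ^ (-e) := hzpow_mono _ (by omega)
    rw [zpow_neg, zpow_neg] at h1
    have hϑe : (0:ℝ) < ϑ ^ e := zpow_pos hϑpos e
    have hρe : (0:ℝ) < ρ ^ e := zpow_pos hρ0 e
    have h2 := inv_anti₀ (by positivity) h1
    rwa [inv_inv, inv_inv] at h2
  -- uniform summable bound for c n
  have hc_boundg : ∀ n k : ℤ, ‖c n k‖ ≤ (D * (ρ ^ n + ϑ ^ n)) * g k := by
    intro n k
    refine (hc_bound n k).trans ?_
    have e1 : ρ ^ (n-k) = ρ ^ n * ρ ^ (-k) := by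
      rw [sub_eq_add_neg, zpow_add₀ (ne_of_gt hρ0)]
    have e2 : ϑ ^ (n-k) = ϑ ^ n * ϑ ^ (-k) := by
      rw [sub_eq_add_neg, zpow_add₀ (ne_of_gt hϑpos)]
    have hexp : ρ ^ (n-k) + ϑ ^ (n-k) ≤ (ρ ^ n + ϑ ^ n) * (ρ ^ (-k) + ϑ ^ (-k)) := by
      rw [e1, e2]
      have p1 : 0 < ρ ^ n * ϑ ^ (-k) := mul_pos (zpow_pos hρ0 n) (zpow_pos hϑpos (-k))
      have p2 : 0 < ϑ ^ n * ρ ^ (-k) := mul_pos (zpow_pos hϑpos n) (zpow_pos hρ0 (-k))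
      nlinarith
    have h2 : frobV (Φ k) * ((CM * (ρ ^ (n-k) + ϑ ^ (n-k))) * frobV Z0c)
        = (CM * frobV Z0c * frobV (Φ k)) * (ρ ^ (n-k) + ϑ ^ (n-k)) := by ring
    have h3 : (D * (ρ ^ n + ϑ ^ n)) * g k
        = (CM * frobV Z0c * frobV (Φ k)) * ((ρ ^ n + ϑ ^ n) * (ρ ^ (-k) + ϑ ^ (-k))) := by
      rw [hD_def, hg_def]; ring
    rw [h2, h3]
    exact mul_le_mul_of_nonneg_left hexp
      (mul_nonneg (mul_nonneg hCM0 (EDB.frobV_nonneg _)) (EDB.frobV_nonneg _))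
  have hcsum : ∀ n : ℤ, Summable (c n) := by
    intro n
    refine Summable.of_norm_bounded (hgsum.mul_left (D * (ρ ^ n + ϑ ^ n))) ?_
    intro k
    exact hc_boundg n k
  -- zpowM in terms of units powers
  have hzpowM : ∀ k : ℤ,
      zpowM AP k = ((u ^ k : (Matrix (Fin J) (Fin J) ℂ)ˣ) : Matrix (Fin J) (Fin J) ℂ) := by
    intro k
    unfold zpowM
    split_ifs with hk
    · have hkm : ((k.toNat : ℕ) : ℤ) = k := Int.toNat_of_nonneg hk
      conv_rhs => rw [← hkm, zpow_natCast, Units.val_pow_eq_pow_val, huAP]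
    · have hkm : (((-k).toNat : ℕ) : ℤ) = -k := Int.toNat_of_nonneg (by omega)
      have hAPinv : AP⁻¹ = ((u⁻¹ : (Matrix (Fin J) (Fin J) ℂ)ˣ) : Matrix (Fin J) (Fin J) ℂ) := by
        rw [Matrix.coe_units_inv, huAP]
      rw [hAPinv, ← Units.val_pow_eq_pow_val, ← zpow_natCast (u⁻¹) (-k).toNat, inv_zpow,
        ← zpow_neg, hkm, neg_neg]
  -- xi as a sum over Mk
  have hxi' : xi = ∑' k : ℤ, Matrix.vecMul (Φ k) (Mk (-k)) := by
    rw [hxi]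
    refine tsum_congr fun k => ?_
    rw [Matrix.vecMul_vecMul, hzpowM (-k)]
  have hxi_term_bound : ∀ k : ℤ, ‖Matrix.vecMul (Φ k) (Mk (-k))‖ ≤ CM * g k := by
    intro k
    refine (EDB.pi_norm_le_frobV _).trans ((EDB.frobV_vecMul _ _).trans ?_)
    calc frobV (Φ k) * ‖Mk (-k)‖
        ≤ frobV (Φ k) * (CM * (ρ ^ (-k) + ϑ ^ (-k))) :=
          mul_le_mul_of_nonneg_left (hMk_bound (-k)) (EDB.frobV_nonneg _)
      _ = CM * g k := by rw [hg_def]; ring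
  have hxi_sum : Summable (fun k : ℤ => Matrix.vecMul (Φ k) (Mk (-k))) :=
    Summable.of_norm_bounded (hgsum.mul_left CM) hxi_term_bound
  -- the xi-term as a full sum
  have hT : ∀ n : ℤ, dotProduct xi ((Mk n).mulVec Z0c) = ∑' k, c n k := by
    intro n
    set L : (Fin J → ℂ) →ₗ[ℂ] ℂ :=
      { toFun := fun v => dotProduct v ((Mk n).mulVec Z0c)
        map_add' := fun x y => add_dotProduct _ _ _
        map_smul' := fun r x => by simp [smul_dotProduct] } with hL_def
    have hLc : dotProduct xi ((Mk n).mulVec Z0c) = L xi := rfl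
    rw [hLc, hxi']
    have hmap := (LinearMap.toContinuousLinearMap L).map_tsum hxi_sum
    have hcoe : ∀ v, (LinearMap.toContinuousLinearMap L) v = L v := fun v => rfl
    calc L (∑' k, Matrix.vecMul (Φ k) (Mk (-k)))
        = ∑' k, L (Matrix.vecMul (Φ k) (Mk (-k))) := by
          rw [← hcoe, hmap]
          exact tsum_congr fun k => hcoe _
      _ = ∑' k, c n k := by
          refine tsum_congr fun k => ?_
          show dotProduct (Matrix.vecMul (Φ k) (Mk (-k))) ((Mk n).mulVec Z0c) = c n k
          rw [← Matrix.dotProduct_mulVec, Matrix.mulVec_mulVec, hMk_mul, hc_eval n k]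
          have harg : -k + n = n - k := by ring
          rw [harg]
  -- rewrite the inner sums
  have hinner : ∀ (n : ℤ) (m : ℕ),
      (∑ j, Ψ (n - m) j * (((A ^ m).mulVec Z0 j : ℝ) : ℂ))
      = c n (n - m) - (if n - (m:ℤ) = 0
          then dotProduct xi ((Mk (m:ℤ)).mulVec Z0c) else 0) := by
    intro n m
    have hdot : (∑ j, Ψ (n - m) j * (((A ^ m).mulVec Z0 j : ℝ) : ℂ))
        = dotProduct (Ψ (n - m)) ((Ac ^ m).mulVec Z0c) := by
      rw [hcast m]
      rfl
    rw [hdot, hΨ (n - m)]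
    have hsubfun : (fun j => Φ (n - m) j - if n - (m:ℤ) = 0 then xi j else 0)
        = (Φ (n - m)) - (if n - (m:ℤ) = 0 then xi else 0) := by
      funext j
      split_ifs with h <;> simp
    rw [hsubfun, Matrix.sub_vecMul, sub_dotProduct]
    congr 1
    · rw [← Matrix.dotProduct_mulVec, Matrix.mulVec_mulVec, hMk_nat m, hc_eval]
      have harg : n - (n - (m:ℤ)) = (m:ℤ) := by ring
      rw [harg]
    · split_ifs with h
      · rw [← Matrix.dotProduct_mulVec, Matrix.mulVec_mulVec, hMk_nat m]
      · rw [Matrix.zero_vecMul, zero_dotProduct]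
  -- main identity
  have hEZ_eq : ∀ n : ℤ,
      EZ n = (∑' k : ℤ, if k ≤ n then c n k else 0)
        - (if 0 ≤ n then ∑' k : ℤ, c n k else 0) := by
    intro n
    rw [hEZ n]
    have hrw : (fun m : ℕ => ∑ j, Ψ (n - m) j * (((A ^ m).mulVec Z0 j : ℝ) : ℂ))
        = fun m : ℕ => c n (n - m) - (if n - (m:ℤ) = 0
            then dotProduct xi ((Mk (m:ℤ)).mulVec Z0c) else 0) := by
      funext m
      exact hinner n m
    rw [hrw]
    have hinj : Function.Injective (fun m : ℕ => n - (m:ℤ)) := by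
      intro a b hab
      simp only at hab
      omega
    have hF1 : Summable (fun m : ℕ => c n (n - (m:ℤ))) := (hcsum n).comp_injective hinj
    have hF2 : Summable (fun m : ℕ => (if n - (m:ℤ) = 0
        then dotProduct xi ((Mk (m:ℤ)).mulVec Z0c) else 0)) := by
      apply summable_of_ne_finset_zero (s := {n.toNat})
      intro m hm
      rw [if_neg]
      simp only [Finset.mem_singleton] at hm
      omega
    rw [Summable.tsum_sub hF1 hF2]
    congr 1
    · have hsupp : Function.support (fun k : ℤ => if k ≤ n then c n k else 0)
          ⊆ Set.range (fun m : ℕ => n - (m:ℤ)) := by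
        intro k hk
        rcases le_or_gt k n with h | h
        · refine ⟨(n - k).toNat, ?_⟩
          show n - (((n - k).toNat : ℕ) : ℤ) = k
          omega
        · exfalso
          apply hk
          show (if k ≤ n then c n k else 0) = 0
          rw [if_neg (not_le.mpr h)]
      calc ∑' m : ℕ, c n (n - (m:ℤ))
          = ∑' m : ℕ, (if (n - (m:ℤ)) ≤ n then c n (n - (m:ℤ)) else 0) :=
            tsum_congr fun m => (if_pos (by omega)).symm
        _ = ∑' k : ℤ, (if k ≤ n then c n k else 0) := hinj.tsum_eq hsupp
    · rcases le_or_gt 0 n with h | h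
      · rw [if_pos h]
        have h1 : (∑' m : ℕ, (if n - (m:ℤ) = 0
            then dotProduct xi ((Mk (m:ℤ)).mulVec Z0c) else 0))
            = dotProduct xi ((Mk ((n.toNat : ℕ) : ℤ)).mulVec Z0c) := by
          rw [tsum_eq_single n.toNat (fun m hm => by rw [if_neg]; omega)]
          rw [if_pos (by omega)]
        rw [h1]
        have h2 : ((n.toNat : ℕ) : ℤ) = n := Int.toNat_of_nonneg h
        rw [h2, hT n]
      · rw [if_neg (not_le.mpr h)]
        refine (tsum_congr fun m => ?_).trans tsum_zero
        rw [if_neg (by omega)]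
  -- final estimates
  refine ⟨2 * D * G, fun n => ?_⟩
  rcases le_or_gt 0 n with hn | hn
  · -- n ≥ 0 : use the ϑ-bound
    have hmin : min (ρ ^ n) (ϑ ^ n) = ϑ ^ n := min_eq_right (hzpow_mono n hn)
    have hs1 : Summable (fun k : ℤ => if k ≤ n then c n k else 0) := by
      refine Summable.of_norm_bounded (hgsum.mul_left (D * (ρ ^ n + ϑ ^ n))) ?_
      intro k
      split_ifs with h
      · exact hc_boundg n k
      · rw [norm_zero]
        exact mul_nonneg (mul_nonneg hD0 (by positivity)) (hg0 k)
    have hid : EZ n = - ∑' k : ℤ, (if n < k then c n k else 0) := by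
      rw [hEZ_eq n, if_pos hn, ← Summable.tsum_sub hs1 (hcsum n), ← tsum_neg]
      refine tsum_congr fun k => ?_
      rcases le_or_gt k n with h | h
      · rw [if_pos h, if_neg (not_lt.mpr h), sub_self, neg_zero]
      · rw [if_neg (not_le.mpr h), if_pos h, zero_sub]
    have hterm : ∀ k : ℤ, ‖(if n < k then c n k else 0)‖ ≤ (2 * D * ϑ ^ n) * g k := by
      intro k
      split_ifs with h
      · refine (hc_bound n k).trans ?_
        have h1 : ρ ^ (n-k) ≤ ϑ ^ (n-k) := hzpow_mono' _ (by omega)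
        have h2 : ϑ ^ (n-k) = ϑ ^ n * ϑ ^ (-k) := by
          rw [sub_eq_add_neg, zpow_add₀ (ne_of_gt hϑpos)]
        have h3 : ρ ^ (n-k) + ϑ ^ (n-k) ≤ 2 * (ϑ ^ n * ϑ ^ (-k)) := by
          rw [← h2]; linarith
        have e1 : frobV (Φ k) * ((CM * (ρ ^ (n-k) + ϑ ^ (n-k))) * frobV Z0c)
            = (D * frobV (Φ k)) * (ρ ^ (n-k) + ϑ ^ (n-k)) := by
          rw [hD_def]; ring
        have e2 : (2 * D * ϑ ^ n) * g k
            = (D * frobV (Φ k)) * (2 * (ϑ ^ n * ϑ ^ (-k)))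
              + (2 * D * ϑ ^ n * frobV (Φ k)) * ρ ^ (-k) := by
          rw [hg_def, hD_def]; ring
        rw [e1, e2]
        have hDf : 0 ≤ D * frobV (Φ k) := mul_nonneg hD0 (EDB.frobV_nonneg _)
        have t1 : (D * frobV (Φ k)) * (ρ ^ (n-k) + ϑ ^ (n-k))
            ≤ (D * frobV (Φ k)) * (2 * (ϑ ^ n * ϑ ^ (-k))) :=
          mul_le_mul_of_nonneg_left h3 hDf
        have t2 : 0 ≤ (2 * D * ϑ ^ n * frobV (Φ k)) * ρ ^ (-k) := by
          have : 0 ≤ 2 * D * ϑ ^ n * frobV (Φ k) :=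
            mul_nonneg (mul_nonneg (by linarith) (zpow_pos hϑpos n).le) (EDB.frobV_nonneg _)
          exact mul_nonneg this (zpow_pos hρ0 (-k)).le
        linarith
      · rw [norm_zero]
        exact mul_nonneg (mul_nonneg (by linarith) (zpow_pos hϑpos n).le) (hg0 k)
    have hsnorm : Summable (fun k : ℤ => ‖(if n < k then c n k else 0)‖) :=
      Summable.of_nonneg_of_le (fun k => norm_nonneg _) hterm
        (hgsum.mul_left (2 * D * ϑ ^ n))
    calc ‖EZ n‖
        = ‖∑' k : ℤ, (if n < k then c n k else 0)‖ := by
          rw [hid, norm_neg]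
      _ ≤ ∑' k : ℤ, ‖(if n < k then c n k else 0)‖ := norm_tsum_le_tsum_norm hsnorm
      _ ≤ ∑' k : ℤ, (2 * D * ϑ ^ n) * g k :=
          Summable.tsum_le_tsum hterm hsnorm (hgsum.mul_left (2 * D * ϑ ^ n))
      _ = (2 * D * ϑ ^ n) * G := by rw [tsum_mul_left]
      _ = 2 * D * G * min (ρ ^ n) (ϑ ^ n) := by rw [hmin]; ring
  · -- n < 0 : use the ρ-bound
    have hmin : min (ρ ^ n) (ϑ ^ n) = ρ ^ n := min_eq_left (hzpow_mono' n hn.le)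
    have hid : EZ n = ∑' k : ℤ, (if k ≤ n then c n k else 0) := by
      rw [hEZ_eq n, if_neg (not_le.mpr hn), sub_zero]
    have hterm : ∀ k : ℤ, ‖(if k ≤ n then c n k else 0)‖ ≤ (2 * D * ρ ^ n) * g k := by
      intro k
      split_ifs with h
      · refine (hc_bound n k).trans ?_
        have h1 : ϑ ^ (n-k) ≤ ρ ^ (n-k) := hzpow_mono _ (by omega)
        have h2 : ρ ^ (n-k) = ρ ^ n * ρ ^ (-k) := by
          rw [sub_eq_add_neg, zpow_add₀ (ne_of_gt hρ0)]
        have h3 : ρ ^ (n-k) + ϑ ^ (n-k) ≤ 2 * (ρ ^ n * ρ ^ (-k)) := by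
          rw [← h2]; linarith
        have e1 : frobV (Φ k) * ((CM * (ρ ^ (n-k) + ϑ ^ (n-k))) * frobV Z0c)
            = (D * frobV (Φ k)) * (ρ ^ (n-k) + ϑ ^ (n-k)) := by
          rw [hD_def]; ring
        have e2 : (2 * D * ρ ^ n) * g k
            = (D * frobV (Φ k)) * (2 * (ρ ^ n * ρ ^ (-k)))
              + (2 * D * ρ ^ n * frobV (Φ k)) * ϑ ^ (-k) := by
          rw [hg_def, hD_def]; ring
        rw [e1, e2]
        have hDf : 0 ≤ D * frobV (Φ k) := mul_nonneg hD0 (EDB.frobV_nonneg _)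
        have t1 : (D * frobV (Φ k)) * (ρ ^ (n-k) + ϑ ^ (n-k))
            ≤ (D * frobV (Φ k)) * (2 * (ρ ^ n * ρ ^ (-k))) :=
          mul_le_mul_of_nonneg_left h3 hDf
        have t2 : 0 ≤ (2 * D * ρ ^ n * frobV (Φ k)) * ϑ ^ (-k) := by
          have : 0 ≤ 2 * D * ρ ^ n * frobV (Φ k) :=
            mul_nonneg (mul_nonneg (by linarith) (zpow_pos hρ0 n).le) (EDB.frobV_nonneg _)
          exact mul_nonneg this (zpow_pos hϑpos (-k)).le
        linarith
      · rw [norm_zero]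
        exact mul_nonneg (mul_nonneg (by linarith) (zpow_pos hρ0 n).le) (hg0 k)
    have hsnorm : Summable (fun k : ℤ => ‖(if k ≤ n then c n k else 0)‖) :=
      Summable.of_nonneg_of_le (fun k => norm_nonneg _) hterm
        (hgsum.mul_left (2 * D * ρ ^ n))
    calc ‖EZ n‖
        = ‖∑' k : ℤ, (if k ≤ n then c n k else 0)‖ := by
          rw [hid]
      _ ≤ ∑' k : ℤ, ‖(if k ≤ n then c n k else 0)‖ := norm_tsum_le_tsum_norm hsnorm
      _ ≤ ∑' k : ℤ, (2 * D * ρ ^ n) * g k :=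
          Summable.tsum_le_tsum hterm hsnorm (hgsum.mul_left (2 * D * ρ ^ n))
      _ = (2 * D * ρ ^ n) * G := by rw [tsum_mul_left]
      _ = 2 * D * G * min (ρ ^ n) (ϑ ^ n) := by rw [hmin]; ring

end
end
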